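/- Let X be a real Banach space with dim X ≥ 2, let F : X → ℝ be convex, x ∈ X, let x* ∈ X* be a subgradient of F at x, and let p > 1 with conjugate exponent p' (1/p + 1/p' = 1). Then F is p-convex at x w.r.t. x* (i.e. there exist K, τ̄ > 0 with δ_{F,x}^{x*}(τ) ≥ Kτ^p for all 0 < τ ≤ τ̄) if and only if F* is p'-smooth at x* w.r.t. x (i.e. there exist K', τ̄' > 0 with ρ_{F*,x*}^{x}(τ) ≤ K'τ^{p'} for all 0 < τ ≤ τ̄'). -/

import Mathlib

open scoped ENNReal

/-- The modulus of smoothness of a normed space `Y`: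
`ρ_Y(τ) = sup {(‖x+τy‖+‖x−τy‖)/2 − 1 : x, y ∈ S_Y}`. -/
noncomputable def rhoSpace (Y : Type*) [NormedAddCommGroup Y] [NormedSpace ℝ Y] (τ : ℝ) : ℝ :=
  sSup {r : ℝ | ∃ x y : Y, ‖x‖ = 1 ∧ ‖y‖ = 1 ∧ r = (‖x + τ • y‖ + ‖x - τ • y‖) / 2 - 1}

/-- The modulus of convexity of a normed space `Y`:
`δ_Y(ε) = inf {1 − ‖y+ỹ‖/2 : y, ỹ ∈ S_Y, ‖y−ỹ‖ = ε}`. -/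
noncomputable def deltaSpace (Y : Type*) [NormedAddCommGroup Y] [NormedSpace ℝ Y] (ε : ℝ) : ℝ :=
  sInf {r : ℝ | ∃ y z : Y, ‖y‖ = 1 ∧ ‖z‖ = 1 ∧ ‖y - z‖ = ε ∧ r = 1 - ‖y + z‖ / 2}

/-- `φ` is a subgradient of `F` at `x`: `F(y) ≥ F(x) + ⟨φ, y−x⟩` for all `y`. -/
def IsSubgradient {X : Type*} [NormedAddCommGroup X] [NormedSpace ℝ X]
    (F : X → ℝ) (x : X) (φ : X →L[ℝ] ℝ) : Prop :=
  ∀ y : X, F x + φ (y - x) ≤ F y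

/-- The linearization error (Bregman divergence)
`Δ_F^{φ}(y,x) = F(y) − F(x) − ⟨φ, y−x⟩`. -/
def breg {X : Type*} [NormedAddCommGroup X] [NormedSpace ℝ X]
    (F : X → ℝ) (φ : X →L[ℝ] ℝ) (y x : X) : ℝ :=
  F y - F x - φ (y - x)

/-- The modulus of smoothness of `F` at `x` w.r.t. `φ`, with values in `[0,∞]`:
`ρ_{F,x}^{φ}(τ) = sup {|Δ_F^{φ}(y,x)| : ‖y−x‖ = τ}`. -/
noncomputable def rhoF {X : Type*} [NormedAddCommGroup X] [NormedSpace ℝ X]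
    (F : X → ℝ) (x : X) (φ : X →L[ℝ] ℝ) (τ : ℝ) : ℝ≥0∞ :=
  ⨆ y ∈ {y : X | ‖y - x‖ = τ}, ENNReal.ofReal |breg F φ y x|

/-- The modulus of convexity of `F` at `x` w.r.t. `φ`, with values in `[0,∞]`:
`δ_{F,x}^{φ}(τ) = inf {|Δ_F^{φ}(y,x)| : ‖y−x‖ = τ}`. -/
noncomputable def deltaF {X : Type*} [NormedAddCommGroup X] [NormedSpace ℝ X]
    (F : X → ℝ) (x : X) (φ : X →L[ℝ] ℝ) (τ : ℝ) : ℝ≥0∞ :=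
  ⨅ y ∈ {y : X | ‖y - x‖ = τ}, ENNReal.ofReal |breg F φ y x|

/-- `jp` is a selection of the duality mapping with exponent `p`:
`⟨j_p(x), x⟩ = ‖j_p(x)‖·‖x‖` and `‖j_p(x)‖ = ‖x‖^{p−1}` for every `x`. -/
def IsDualitySelection {X : Type*} [NormedAddCommGroup X] [NormedSpace ℝ X]
    (p : ℝ) (jp : X → X →L[ℝ] ℝ) : Prop :=
  ∀ x : X, jp x x = ‖jp x‖ * ‖x‖ ∧ ‖jp x‖ = ‖x‖ ^ (p - 1)

/-- The convex conjugate `F*(φ) = sup_{z ∈ X} (⟨φ,z⟩ − F(z)) ∈ ℝ ∪ {+∞}` (as `EReal`). -/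
noncomputable def fconj {X : Type*} [NormedAddCommGroup X] [NormedSpace ℝ X]
    (F : X → ℝ) (φ : X →L[ℝ] ℝ) : EReal :=
  ⨆ z : X, ((φ z - F z : ℝ) : EReal)

/-- `ρ_{F*,x*}^{x}(τ) = sup {F*(y*) − F*(x*) − ⟨y*−x*, x⟩ : ‖y*−x*‖ = τ}` (as `EReal`). -/
noncomputable def rhoFconj {X : Type*} [NormedAddCommGroup X] [NormedSpace ℝ X]
    (F : X → ℝ) (xs : X →L[ℝ] ℝ) (x : X) (τ : ℝ) : EReal :=
  ⨆ ψ ∈ {ψ : X →L[ℝ] ℝ | ‖ψ - xs‖ = τ},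
    (fconj F ψ - fconj F xs - (((ψ - xs) x : ℝ) : EReal))

/-- for convex `F`, `x* ∈ ∂F(x)`, and `p > 1` with `1/p + 1/p' = 1`:
`F` is `p`-convex at `x` w.r.t. `x*` iff `F*` is `p'`-smooth at `x*` w.r.t. `x`. -/
theorem stmt9 (X : Type*) [NormedAddCommGroup X] [NormedSpace ℝ X] [CompleteSpace X]
    (hdim : 2 ≤ Module.rank ℝ X)
    (F : X → ℝ) (hF : ConvexOn ℝ Set.univ F)
    (x : X) (xs : X →L[ℝ] ℝ) (hxs : IsSubgradient F x xs)
    (p p' : ℝ) (hp : 1 < p) (hpp' : 1 / p + 1 / p' = 1) :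
    (∃ K τbar : ℝ, 0 < K ∧ 0 < τbar ∧
        ∀ τ : ℝ, 0 < τ → τ ≤ τbar → ENNReal.ofReal (K * τ ^ p) ≤ deltaF F x xs τ) ↔
    (∃ K' τbar' : ℝ, 0 < K' ∧ 0 < τbar' ∧
        ∀ τ : ℝ, 0 < τ → τ ≤ τbar' → rhoFconj F xs x τ ≤ ((K' * τ ^ p' : ℝ) : EReal)) := by
  have hp0 : (0:ℝ) < p := lt_trans one_pos hp
  have hconj : Real.HolderConjugate p p' := Real.holderConjugate_iff.mpr ⟨hp, by simpa only [one_div] using hpp'⟩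
  have hp'1 : 1 < p' := hconj.symm.lt
  have hp'0 : (0:ℝ) < p' := hconj.symm.pos
  have hp1ne : p - 1 ≠ 0 := ne_of_gt (by linarith)
  have hpe : (p - 1) * p' = p := by rw [hconj.conjugate_eq]; field_simp
  set G : X → ℝ := fun y => breg F xs y x with hGdef
  have hGx : G x = 0 := by simp [hGdef, breg]
  have hG0 : ∀ y, 0 ≤ G y := by
    intro y; have := hxs y; simp only [hGdef, breg]; linarith
  have hGconv : ∀ z : X, ∀ l : ℝ, 0 ≤ l → l ≤ 1 → G (x + l • (z - x)) ≤ l * G z := by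
    intro z l hl0 hl1
    have h := hF.2 (Set.mem_univ x) (Set.mem_univ z) (by linarith : (0:ℝ) ≤ 1 - l) hl0
      (by ring)
    have he : x + l • (z - x) = (1 - l) • x + l • z := by
      rw [sub_smul, one_smul, smul_sub]; abel
    rw [he]
    simp only [hGdef, breg]
    have hxs' : xs ((1 - l) • x + l • z - x) = l * xs (z - x) := by
      have : (1 - l) • x + l • z - x = l • (z - x) := by
        rw [sub_smul, one_smul, smul_sub]; abel
      rw [this, map_smul, smul_eq_mul]
    rw [hxs']
    have h2 := h
    rw [smul_eq_mul, smul_eq_mul] at h2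
    have h3 : xs (z - x) = xs z - xs x := by rw [map_sub]
    nlinarith [h2]
  have hfx : fconj F xs = ((xs x - F x : ℝ) : EReal) := by
    apply le_antisymm
    · refine iSup_le fun z => ?_
      rw [EReal.coe_le_coe_iff]
      have := hxs z
      rw [map_sub] at this
      linarith
    · exact le_iSup (fun z => ((xs z - F z : ℝ) : EReal)) x
  -- G value lower bound from the deltaF hypothesis
  constructor
  · rintro ⟨K, τb, hK, hτb, hyp⟩
    have hGlow : ∀ z : X, 0 < ‖z - x‖ → ‖z - x‖ ≤ τb → K * ‖z - x‖ ^ p ≤ G z := by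
      intro z h0 h1
      have h2 := hyp ‖z - x‖ h0 h1
      have h3 : deltaF F x xs ‖z - x‖ ≤ ENNReal.ofReal |G z| := by
        simp only [deltaF, hGdef]
        exact iInf_le_of_le z (iInf_le_of_le rfl le_rfl)
      have := le_trans h2 h3
      rw [ENNReal.ofReal_le_ofReal_iff (abs_nonneg _)] at this
      rwa [abs_of_nonneg (hG0 z)] at this
    set A : ℝ := (p * K) ^ (1/p) with hA
    have hA0 : 0 < A := Real.rpow_pos_of_pos (by positivity) _
    have hAp : A ^ p = p * K := by
      rw [hA, ← Real.rpow_mul (by positivity), one_div_mul_cancel (ne_of_gt hp0),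
        Real.rpow_one]
    set K' : ℝ := 1 / (p' * A ^ p') with hK'
    have hK'0 : 0 < K' := by
      have : (0:ℝ) < A ^ p' := Real.rpow_pos_of_pos hA0 _
      positivity
    have hτbp : τb ^ p = τb ^ (p-1) * τb := by
      nth_rewrite 1 [show p = (p-1) + 1 by ring]
      rw [Real.rpow_add hτb, Real.rpow_one]
    refine ⟨K', K * τb ^ (p-1), hK'0, by positivity, ?_⟩
    intro τ hτ0 hτle
    simp only [rhoFconj]
    refine iSup₂_le fun ψ hψ => ?_
    have hψn : ‖ψ - xs‖ = τ := hψ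
    -- pointwise bound
    have hbound : ∀ z : X, (ψ - xs) (z - x) - G z ≤ K' * τ ^ p' := by
      intro z
      have hφz : (ψ - xs) (z - x) ≤ τ * ‖z - x‖ := by
        calc (ψ - xs) (z - x) ≤ ‖(ψ - xs) (z - x)‖ := le_abs_self _
          _ ≤ ‖ψ - xs‖ * ‖z - x‖ := (ψ - xs).le_opNorm _
          _ = τ * ‖z - x‖ := by rw [hψn]
      set t : ℝ := ‖z - x‖ with ht
      have ht0 : 0 ≤ t := norm_nonneg _
      rcases eq_or_lt_of_le ht0 with h | h
      · -- t = 0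
        have hz : z = x := by
          have : ‖z - x‖ = 0 := h.symm
          rw [norm_eq_zero, sub_eq_zero] at this; exact this
        subst hz
        simp only [sub_self, map_zero, hGx, sub_zero, hGdef]
        simp only [breg, sub_self, map_zero, sub_zero]
        have : (0:ℝ) ≤ K' * τ ^ p' := by positivity
        simpa using this
      · rcases le_or_gt t τb with hcase | hcase
        · -- Young's inequality regime
          have hGz : K * t ^ p ≤ G z := hGlow z h hcase
          have hy := Real.young_inequality_of_nonneg
            (mul_nonneg ht0 hA0.le) (by positivity : (0:ℝ) ≤ τ / A) hconj
          have e1 : t * A * (τ / A) = τ * t := by field_simp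
          have e2 : (t * A) ^ p = t ^ p * (p * K) := by
            rw [Real.mul_rpow ht0 hA0.le, hAp]
          have e3 : (τ / A) ^ p' = τ ^ p' / A ^ p' := Real.div_rpow hτ0.le hA0.le p'
          rw [e1, e2, e3] at hy
          have hy2 : τ * t ≤ K * t ^ p + K' * τ ^ p' := by
            have hApos : (0:ℝ) < A ^ p' := Real.rpow_pos_of_pos hA0 _
            rw [hK']
            calc τ * t ≤ t ^ p * (p * K) / p + τ ^ p' / A ^ p' / p' := hy
              _ = K * t ^ p + 1 / (p' * A ^ p') * τ ^ p' := by field_simp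
          linarith
        · -- far away : linear lower bound on G
          have hl0 : (0:ℝ) ≤ τb / t := by positivity
          have hl1 : τb / t ≤ 1 := by
            rw [div_le_one h]; linarith
          have hw := hGconv z (τb / t) hl0 hl1
          have hwn : ‖x + (τb / t) • (z - x) - x‖ = τb := by
            rw [add_sub_cancel_left, norm_smul, Real.norm_eq_abs,
              abs_of_nonneg hl0, ← ht, div_mul_cancel₀]
            exact ne_of_gt h
          have hGw : K * τb ^ p ≤ G (x + (τb / t) • (z - x)) := by
            have h2 := hyp τb hτb le_rfl
            have h3 : deltaF F x xs τb ≤ ENNReal.ofReal |G (x + (τb / t) • (z - x))| := by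
              simp only [deltaF, hGdef]
              exact iInf_le_of_le _ (iInf_le_of_le hwn le_rfl)
            have := le_trans h2 h3
            rw [ENNReal.ofReal_le_ofReal_iff (abs_nonneg _)] at this
            rwa [abs_of_nonneg (hG0 _)] at this
          have hGz : K * τb ^ (p-1) * t ≤ G z := by
            have h4 : K * τb ^ p ≤ (τb / t) * G z := le_trans hGw hw
            rw [hτbp] at h4
            have h5 : K * τb ^ (p-1) * τb * t ≤ τb * G z := by
              have := mul_le_mul_of_nonneg_left h4 ht0
              calc K * τb ^ (p-1) * τb * t = t * (K * (τb ^ (p-1) * τb)) := by ring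
                _ ≤ t * (τb / t * G z) := this
                _ = τb * G z := by field_simp
            have := (mul_le_mul_iff_of_pos_left hτb).mp (by linarith : τb * (K * τb ^ (p-1) * t) ≤ τb * G z)
            linarith
          have : (ψ - xs) (z - x) ≤ G z := by
            calc (ψ - xs) (z - x) ≤ τ * t := hφz
              _ ≤ (K * τb ^ (p-1)) * t := by
                apply mul_le_mul_of_nonneg_right hτle ht0
              _ ≤ G z := hGz
          have hpos : (0:ℝ) ≤ K' * τ ^ p' := by positivity
          linarith
    -- now conclude in EReal
    have hB : fconj F ψ ≤ ((K' * τ ^ p' + (ψ - xs) x + (xs x - F x) : ℝ) : EReal) := by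
      refine iSup_le fun z => ?_
      rw [EReal.coe_le_coe_iff]
      have hb := hbound z
      have he : ψ z - F z = (ψ - xs) (z - x) - G z + (ψ - xs) x + (xs x - F x) := by
        simp only [hGdef, breg, ContinuousLinearMap.sub_apply, map_sub]
        ring
      rw [he]; linarith
    rw [hfx]
    calc fconj F ψ - ((xs x - F x : ℝ) : EReal) - (((ψ - xs) x : ℝ) : EReal)
        ≤ ((K' * τ ^ p' + (ψ - xs) x + (xs x - F x) : ℝ) : EReal)
            - ((xs x - F x : ℝ) : EReal) - (((ψ - xs) x : ℝ) : EReal) :=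
          EReal.sub_le_sub (EReal.sub_le_sub hB le_rfl) le_rfl
      _ = ((K' * τ ^ p' : ℝ) : EReal) := by
          rw [← EReal.coe_sub, ← EReal.coe_sub]; norm_cast; ring
  · rintro ⟨K', τb', hK', hτb', hyp⟩
    set c : ℝ := min 1 ((1 / (2 * K')) ^ (1 / (p' - 1))) with hc
    have hc0 : 0 < c := lt_min one_pos (Real.rpow_pos_of_pos (by positivity) _)
    have hcK : K' * c ^ p' ≤ c / 2 := by
      have h1 : c ^ (p' - 1) ≤ 1 / (2 * K') := by
        calc c ^ (p' - 1)
            ≤ ((1 / (2 * K')) ^ (1 / (p' - 1))) ^ (p' - 1) :=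
              Real.rpow_le_rpow hc0.le (min_le_right _ _) (by linarith)
          _ = 1 / (2 * K') := by
              rw [← Real.rpow_mul (by positivity),
                one_div_mul_cancel (ne_of_gt (by linarith : (0:ℝ) < p' - 1)),
                Real.rpow_one]
      have h2 : c ^ p' = c ^ (p' - 1) * c := by
        nth_rewrite 1 [show p' = (p' - 1) + 1 by ring]
        rw [Real.rpow_add hc0, Real.rpow_one]
      rw [h2]
      calc K' * (c ^ (p' - 1) * c) ≤ K' * (1 / (2 * K') * c) := by
            apply mul_le_mul_of_nonneg_left _ hK'.le
            exact mul_le_mul_of_nonneg_right h1 hc0.le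
        _ = c / 2 := by field_simp
    refine ⟨c / 2, (τb' / c) ^ (1 / (p - 1)), by positivity, Real.rpow_pos_of_pos (by positivity) _, ?_⟩
    intro τ hτ0 hτle
    refine le_iInf₂ fun y hy => ?_
    have hyn : ‖y - x‖ = τ := hy
    rw [abs_of_nonneg (hG0 y)]
    apply ENNReal.ofReal_le_ofReal
    -- choose the norming functional
    have hne : y - x ≠ 0 := by
      intro h0; rw [h0, norm_zero] at hyn; exact absurd hyn.symm (ne_of_gt hτ0)
    obtain ⟨f, hf1, hfy⟩ := exists_dual_vector ℝ (y - x) (norm_ne_zero_iff.mpr hne)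
    set s : ℝ := c * τ ^ (p - 1) with hs
    have hs0 : 0 < s := by
      have := Real.rpow_pos_of_pos hτ0 (p - 1); positivity
    have hsle : s ≤ τb' := by
      have h1 : τ ^ (p - 1) ≤ ((τb' / c) ^ (1 / (p - 1))) ^ (p - 1) :=
        Real.rpow_le_rpow hτ0.le hτle (by linarith)
      have h2 : ((τb' / c) ^ (1 / (p - 1))) ^ (p - 1) = τb' / c := by
        rw [← Real.rpow_mul (by positivity), one_div_mul_cancel hp1ne, Real.rpow_one]
      rw [hs]
      calc c * τ ^ (p - 1) ≤ c * (τb' / c) := by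
            apply mul_le_mul_of_nonneg_left _ hc0.le
            rw [← h2]; exact h1
        _ = τb' := by field_simp
    set ψ : X →L[ℝ] ℝ := xs + s • f with hψdef
    have hψs : ψ - xs = s • f := by rw [hψdef]; abel
    have hψn : ‖ψ - xs‖ = s := by
      rw [hψs]
      rw [norm_smul s f, Real.norm_eq_abs, abs_of_pos hs0, hf1, mul_one]
    have key := hyp s hs0 hsle
    have hchain : ((ψ y - F y - (xs x - F x) - (ψ - xs) x : ℝ) : EReal) ≤
        ((K' * s ^ p' : ℝ) : EReal) := by
      calc ((ψ y - F y - (xs x - F x) - (ψ - xs) x : ℝ) : EReal)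
          = ((ψ y - F y : ℝ) : EReal) - ((xs x - F x : ℝ) : EReal)
              - (((ψ - xs) x : ℝ) : EReal) := by norm_cast
        _ ≤ fconj F ψ - fconj F xs - (((ψ - xs) x : ℝ) : EReal) := by
            rw [hfx]
            exact EReal.sub_le_sub (EReal.sub_le_sub
              (le_iSup (fun z => ((ψ z - F z : ℝ) : EReal)) y) le_rfl) le_rfl
        _ ≤ rhoFconj F xs x s := by
            simp only [rhoFconj]
            exact le_iSup_of_le ψ (le_iSup_of_le hψn le_rfl)
        _ ≤ ((K' * s ^ p' : ℝ) : EReal) := key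
    rw [EReal.coe_le_coe_iff] at hchain
    have hGy : s * τ - K' * s ^ p' ≤ G y := by
      have hψy : ψ y = xs y + s * f y := by
        rw [hψdef]; simp [smul_eq_mul]
      have hψx : (ψ - xs) x = s * f x := by
        rw [hψs]; simp [smul_eq_mul]
      have hfyx : f y - f x = τ := by
        have : f (y - x) = τ := by rw [hfy, hyn]; norm_cast
        rw [map_sub] at this; linarith
      have hxsyx : xs (y - x) = xs y - xs x := map_sub xs y x
      have h5 : s * f y - s * f x = s * τ := by rw [← mul_sub, hfyx]
      simp only [hGdef, breg]
      rw [hxsyx]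
      rw [hψy, hψx] at hchain
      linarith
    -- arithmetic
    have e1 : s * τ = c * τ ^ p := by
      rw [hs, show p = (p - 1) + 1 by ring, Real.rpow_add hτ0, Real.rpow_one]
      ring
    have e2 : s ^ p' = c ^ p' * τ ^ p := by
      rw [hs, Real.mul_rpow hc0.le (Real.rpow_nonneg hτ0.le _),
        ← Real.rpow_mul hτ0.le, hpe]
    have e3 : K' * s ^ p' ≤ c / 2 * τ ^ p := by
      rw [e2]
      calc K' * (c ^ p' * τ ^ p) = (K' * c ^ p') * τ ^ p := by ring
        _ ≤ c / 2 * τ ^ p := by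
            apply mul_le_mul_of_nonneg_right hcK (Real.rpow_nonneg hτ0.le _)
    calc c / 2 * τ ^ p = c * τ ^ p - c / 2 * τ ^ p := by ring
      _ ≤ s * τ - K' * s ^ p' := by rw [e1]; linarith
      _ ≤ G y := hGy
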